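/- Let A and B be finite connected graphs. The Cartesian product A□B is generalized t-edge distance-balanced if A and B are both generalized t-edge distance-balanced and generalized t-distance-balanced, with consistent orientations (i.e., for each edge a₁a₂ ∈ E(A), m_{a₁} = t·m_{a₂} and n_{a₁} = t·n_{a₂} simultaneously, and similarly for B). -/

import Mathlib

open SimpleGraph Finset

/-- Distance from a vertex to an edge: the minimum distance to its endpoints. -/
noncomputable def edgeDist {V : Type*} (G : SimpleGraph V) (v : V) (e : Sym2 V) : ℕ :=
  Sym2.lift ⟨fun x y => min (G.dist v x) (G.dist v y), fun _ _ => min_comm _ _⟩ e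

/-- Number of edges strictly closer to `α` than to `β`. -/
noncomputable def mCount {V : Type*} (G : SimpleGraph V) (α β : V) : ℕ :=
  {e ∈ G.edgeSet | edgeDist G α e < edgeDist G β e}.ncard

/-- Number of vertices strictly closer to `α` than to `β`. -/
noncomputable def nCount {V : Type*} (G : SimpleGraph V) (α β : V) : ℕ :=
  {w : V | G.dist w α < G.dist w β}.ncard

/-- Number of edges other than `αβ` itself equidistant from `α` and `β`. -/
noncomputable def m0Count {V : Type*} (G : SimpleGraph V) (α β : V) : ℕ :=
  {e ∈ G.edgeSet | e ≠ s(α, β) ∧ edgeDist G α e = edgeDist G β e}.ncard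

/-- The distance-partition class `D'^i_j(αβ)`: edges at distance `i` from `α`
and `j` from `β`. -/
def Dset {V : Type*} (G : SimpleGraph V) (α β : V) (i j : ℕ) : Set (Sym2 V) :=
  {e ∈ G.edgeSet | edgeDist G α e = i ∧ edgeDist G β e = j}

/-- Generalized t-edge distance-balanced graph. -/
def GtEDB {V : Type*} (G : SimpleGraph V) (t : ℕ) : Prop :=
  ∀ α β : V, G.Adj α β →
    mCount G α β = t * mCount G β α ∨ mCount G β α = t * mCount G α β

/-- The lexicographic product of two simple graphs. -/
def lexProd {V W : Type*} (A : SimpleGraph V) (B : SimpleGraph W) :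
    SimpleGraph (V × W) where
  Adj p q := A.Adj p.1 q.1 ∨ (p.1 = q.1 ∧ B.Adj p.2 q.2)
  symm := by
    constructor
    rintro p q (h | ⟨h1, h2⟩)
    · exact Or.inl h.symm
    · exact Or.inr ⟨h1.symm, h2.symm⟩
  loopless := by
    constructor
    rintro p (h | ⟨_, h⟩)
    · exact A.loopless.irrefl _ h
    · exact B.loopless.irrefl _ h
section BoxProdAux

variable {V W : Type*} [Fintype V] [Fintype W]
variable {A : SimpleGraph V} {B : SimpleGraph W}

private lemma dist_le_walk (hA : A.Connected) (hB : B.Connected) :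
    ∀ {x y : V × W} (w : (A.boxProd B).Walk x y),
      A.dist x.1 y.1 + B.dist x.2 y.2 ≤ w.length := by
  intro x y w
  induction w with
  | nil => simp [SimpleGraph.dist_self]
  | @cons a b c h w ih =>
    rcases h with ⟨h1, h2⟩ | ⟨h1, h2⟩
    · have t1 : A.dist a.1 c.1 ≤ A.dist a.1 b.1 + A.dist b.1 c.1 := hA.dist_triangle
      have t2 : A.dist a.1 b.1 = 1 := SimpleGraph.dist_eq_one_iff_adj.mpr h1
      have t3 : B.dist a.2 c.2 = B.dist b.2 c.2 := by rw [h2]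
      show A.dist a.1 c.1 + B.dist a.2 c.2 ≤ w.length + 1
      omega
    · have t1 : B.dist a.2 c.2 ≤ B.dist a.2 b.2 + B.dist b.2 c.2 := hB.dist_triangle
      have t2 : B.dist a.2 b.2 = 1 := SimpleGraph.dist_eq_one_iff_adj.mpr h1
      have t3 : A.dist a.1 c.1 = A.dist b.1 c.1 := by rw [h2]
      show A.dist a.1 c.1 + B.dist a.2 c.2 ≤ w.length + 1
      omega

private lemma boxProd_dist (hA : A.Connected) (hB : B.Connected) (x y : V × W) :
    (A.boxProd B).dist x y = A.dist x.1 y.1 + B.dist x.2 y.2 := by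
  obtain ⟨x1, x2⟩ := x
  obtain ⟨y1, y2⟩ := y
  refine le_antisymm ?_ ?_
  · obtain ⟨w₁, h₁⟩ := hA.exists_walk_length_eq_dist x1 y1
    obtain ⟨w₂, h₂⟩ := hB.exists_walk_length_eq_dist x2 y2
    have := SimpleGraph.dist_le ((w₁.boxProdLeft B x2).append (w₂.boxProdRight A y1))
    have e1 : (w₁.boxProdLeft B x2).length = w₁.length := SimpleGraph.Walk.length_map _ _
    have e2 : (w₂.boxProdRight A y1).length = w₂.length := SimpleGraph.Walk.length_map _ _
    rw [SimpleGraph.Walk.length_append, e1, e2, h₁, h₂] at this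
    exact this
  · obtain ⟨w, hw⟩ := (hA.boxProd hB).exists_walk_length_eq_dist (x1, x2) (y1, y2)
    rw [← hw]
    exact dist_le_walk hA hB w

/-- Map an edge of `A` and a vertex of `B` to an edge of `A □ B`. -/
private def phiA (e : Sym2 V) (c : W) : Sym2 (V × W) := Sym2.map (fun v => (v, c)) e

/-- Map a vertex of `A` and an edge of `B` to an edge of `A □ B`. -/
private def phiB (x : V) (e : Sym2 W) : Sym2 (V × W) := Sym2.map (fun w => (x, w)) e

private lemma phiA_mem {e : Sym2 V} {c : W} :
    phiA e c ∈ (A.boxProd B).edgeSet ↔ e ∈ A.edgeSet := by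
  induction e using Sym2.ind with
  | _ x y => simp [phiA, SimpleGraph.mem_edgeSet, SimpleGraph.boxProd_adj_left]

private lemma phiB_mem {x : V} {e : Sym2 W} :
    phiB x e ∈ (A.boxProd B).edgeSet ↔ e ∈ B.edgeSet := by
  induction e using Sym2.ind with
  | _ c d => simp [phiB, SimpleGraph.mem_edgeSet, SimpleGraph.boxProd_adj_right]

private lemma edgeDist_phiA (hA : A.Connected) (hB : B.Connected)
    (α : V) (β : W) (e : Sym2 V) (c : W) :
    edgeDist (A.boxProd B) (α, β) (phiA e c) = edgeDist A α e + B.dist β c := by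
  induction e using Sym2.ind with
  | _ x y =>
    simp only [phiA, Sym2.map_pair_eq, edgeDist, Sym2.lift_mk,
      boxProd_dist hA hB]
    exact min_add_add_right _ _ _

private lemma edgeDist_phiB (hA : A.Connected) (hB : B.Connected)
    (α : V) (β : W) (x : V) (e : Sym2 W) :
    edgeDist (A.boxProd B) (α, β) (phiB x e) = A.dist α x + edgeDist B β e := by
  induction e using Sym2.ind with
  | _ c d =>
    simp only [phiB, Sym2.map_pair_eq, edgeDist, Sym2.lift_mk,
      boxProd_dist hA hB]
    exact min_add_add_left _ _ _

private lemma phiA_inj : Function.Injective (fun p : Sym2 V × W => phiA p.1 p.2) := by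
  rintro ⟨e, c⟩ ⟨e', c'⟩ h
  induction e using Sym2.ind with
  | _ x y =>
  induction e' using Sym2.ind with
  | _ x' y' =>
  simp only [phiA, Sym2.map_pair_eq, Sym2.eq_iff, Prod.mk.injEq] at h
  simp only [Prod.mk.injEq, Sym2.eq_iff]
  tauto

private lemma phiB_inj : Function.Injective (fun p : V × Sym2 W => phiB p.1 p.2) := by
  rintro ⟨x, e⟩ ⟨x', e'⟩ h
  induction e using Sym2.ind with
  | _ c d =>
  induction e' using Sym2.ind with
  | _ c' d' =>
  simp only [phiB, Sym2.map_pair_eq, Sym2.eq_iff, Prod.mk.injEq] at h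
  simp only [Prod.mk.injEq, Sym2.eq_iff]
  tauto

private lemma phiA_ne_phiB {e : Sym2 V} (he : e ∈ A.edgeSet) (c : W) (x : V) (e' : Sym2 W) :
    phiA e c ≠ phiB x e' := by
  induction e using Sym2.ind with
  | _ x₁ x₂ =>
  induction e' using Sym2.ind with
  | _ c₁ c₂ =>
  have hne : x₁ ≠ x₂ := (A.mem_edgeSet.mp he).ne
  intro h
  simp only [phiA, phiB, Sym2.map_pair_eq, Sym2.eq_iff, Prod.mk.injEq] at h
  obtain (⟨⟨g1, _⟩, ⟨g2, _⟩⟩ | ⟨⟨g1, _⟩, ⟨g2, _⟩⟩) := h <;> exact hne (g1.trans g2.symm)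

private lemma ncard_prod {X Y : Type*} (s : Set X) (t : Set Y) :
    (s ×ˢ t).ncard = s.ncard * t.ncard := by
  rw [← Nat.card_coe_set_eq, ← Nat.card_coe_set_eq, ← Nat.card_coe_set_eq, ← Nat.card_prod]
  exact Nat.card_congr (Equiv.Set.prod s t)

private lemma master (hA : A.Connected) (hB : B.Connected) (P₁ P₂ : V × W) :
    mCount (A.boxProd B) P₁ P₂ =
      {p : Sym2 V × W | p.1 ∈ A.edgeSet ∧
        edgeDist (A.boxProd B) P₁ (phiA p.1 p.2) <
          edgeDist (A.boxProd B) P₂ (phiA p.1 p.2)}.ncard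
      + {p : V × Sym2 W | p.2 ∈ B.edgeSet ∧
        edgeDist (A.boxProd B) P₁ (phiB p.1 p.2) <
          edgeDist (A.boxProd B) P₂ (phiB p.1 p.2)}.ncard := by
  classical
  set TA : Set (Sym2 V × W) := {p | p.1 ∈ A.edgeSet ∧
    edgeDist (A.boxProd B) P₁ (phiA p.1 p.2) < edgeDist (A.boxProd B) P₂ (phiA p.1 p.2)}
    with hTA
  set TB : Set (V × Sym2 W) := {p | p.2 ∈ B.edgeSet ∧
    edgeDist (A.boxProd B) P₁ (phiB p.1 p.2) < edgeDist (A.boxProd B) P₂ (phiB p.1 p.2)}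
    with hTB
  have himg : {e ∈ (A.boxProd B).edgeSet |
      edgeDist (A.boxProd B) P₁ e < edgeDist (A.boxProd B) P₂ e}
      = (fun p : Sym2 V × W => phiA p.1 p.2) '' TA
        ∪ (fun p : V × Sym2 W => phiB p.1 p.2) '' TB := by
    ext e
    constructor
    · rintro ⟨hmem, hlt⟩
      induction e using Sym2.ind with
      | _ p q =>
      obtain ⟨p1, p2⟩ := p
      obtain ⟨q1, q2⟩ := q
      rcases ((A.boxProd B).mem_edgeSet).mp hmem with ⟨h1, h2⟩ | ⟨h1, h2⟩
      · dsimp only at h1 h2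
        subst h2
        refine Or.inl ⟨(s(p1, q1), p2), ⟨A.mem_edgeSet.mpr h1, ?_⟩, rfl⟩
        exact hlt
      · dsimp only at h1 h2
        subst h2
        refine Or.inr ⟨(p1, s(p2, q2)), ⟨B.mem_edgeSet.mpr h1, ?_⟩, rfl⟩
        exact hlt
    · rintro (⟨⟨e', c⟩, ⟨hmem, hlt⟩, rfl⟩ | ⟨⟨x, e'⟩, ⟨hmem, hlt⟩, rfl⟩)
      · exact ⟨phiA_mem.mpr hmem, hlt⟩
      · exact ⟨phiB_mem.mpr hmem, hlt⟩
  have hdisj : Disjoint ((fun p : Sym2 V × W => phiA p.1 p.2) '' TA)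
      ((fun p : V × Sym2 W => phiB p.1 p.2) '' TB) := by
    rw [Set.disjoint_left]
    rintro e ⟨⟨e', c⟩, ⟨hmem, -⟩, rfl⟩ ⟨⟨x, e''⟩, ⟨-, -⟩, h⟩
    exact phiA_ne_phiB hmem c x e'' h.symm
  rw [mCount, himg, Set.ncard_union_eq hdisj (Set.toFinite _) (Set.toFinite _),
    Set.ncard_image_of_injective _ phiA_inj, Set.ncard_image_of_injective _ phiB_inj]

private lemma keyA (hA : A.Connected) (hB : B.Connected) {α₁ α₂ : V} (β : W)
    (h : A.Adj α₁ α₂) :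
    mCount (A.boxProd B) (α₁, β) (α₂, β) =
      mCount A α₁ α₂ * Fintype.card W + nCount A α₁ α₂ * B.edgeSet.ncard := by
  rw [master hA hB]
  congr 1
  · have hset : {p : Sym2 V × W | p.1 ∈ A.edgeSet ∧
        edgeDist (A.boxProd B) (α₁, β) (phiA p.1 p.2) <
          edgeDist (A.boxProd B) (α₂, β) (phiA p.1 p.2)}
        = {e ∈ A.edgeSet | edgeDist A α₁ e < edgeDist A α₂ e} ×ˢ (Set.univ : Set W) := by
      ext ⟨e, c⟩
      simp only [Set.mem_setOf_eq, Set.mem_prod, Set.mem_univ, and_true,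
        edgeDist_phiA hA hB, Set.mem_sep_iff]
      constructor <;> rintro ⟨h1, h2⟩ <;> exact ⟨h1, by omega⟩
    rw [hset, ncard_prod, mCount, Set.ncard_univ, Nat.card_eq_fintype_card]
  · have hset : {p : V × Sym2 W | p.2 ∈ B.edgeSet ∧
        edgeDist (A.boxProd B) (α₁, β) (phiB p.1 p.2) <
          edgeDist (A.boxProd B) (α₂, β) (phiB p.1 p.2)}
        = {x : V | A.dist x α₁ < A.dist x α₂} ×ˢ B.edgeSet := by
      ext ⟨x, e⟩
      simp only [Set.mem_setOf_eq, Set.mem_prod, edgeDist_phiB hA hB]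
      rw [SimpleGraph.dist_comm (u := x) (v := α₁), SimpleGraph.dist_comm (u := x) (v := α₂)]
      constructor <;> rintro ⟨h1, h2⟩ <;> refine ⟨?_, ?_⟩ <;> first | omega | assumption
    rw [hset, ncard_prod, nCount]

private lemma keyB (hA : A.Connected) (hB : B.Connected) (α : V) {β₁ β₂ : W}
    (h : B.Adj β₁ β₂) :
    mCount (A.boxProd B) (α, β₁) (α, β₂) =
      A.edgeSet.ncard * nCount B β₁ β₂ + Fintype.card V * mCount B β₁ β₂ := by
  rw [master hA hB]
  congr 1
  · have hset : {p : Sym2 V × W | p.1 ∈ A.edgeSet ∧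
        edgeDist (A.boxProd B) (α, β₁) (phiA p.1 p.2) <
          edgeDist (A.boxProd B) (α, β₂) (phiA p.1 p.2)}
        = A.edgeSet ×ˢ {c : W | B.dist c β₁ < B.dist c β₂} := by
      ext ⟨e, c⟩
      simp only [Set.mem_setOf_eq, Set.mem_prod, edgeDist_phiA hA hB]
      rw [SimpleGraph.dist_comm (u := c) (v := β₁), SimpleGraph.dist_comm (u := c) (v := β₂)]
      constructor <;> rintro ⟨h1, h2⟩ <;> refine ⟨?_, ?_⟩ <;> first | omega | assumption
    rw [hset, ncard_prod, nCount]
  · have hset : {p : V × Sym2 W | p.2 ∈ B.edgeSet ∧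
        edgeDist (A.boxProd B) (α, β₁) (phiB p.1 p.2) <
          edgeDist (A.boxProd B) (α, β₂) (phiB p.1 p.2)}
        = (Set.univ : Set V) ×ˢ {e ∈ B.edgeSet | edgeDist B β₁ e < edgeDist B β₂ e} := by
      ext ⟨x, e⟩
      simp only [Set.mem_setOf_eq, Set.mem_prod, Set.mem_univ, true_and,
        edgeDist_phiB hA hB, Set.mem_sep_iff]
      constructor <;> rintro ⟨h1, h2⟩ <;> exact ⟨h1, by omega⟩
    rw [hset, ncard_prod, mCount, Set.ncard_univ, Nat.card_eq_fintype_card]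

end BoxProdAux

/-- if `A` and `B` are Gt-EDB and Gt-DB with consistent
orientations, then `A □ B` is Gt-EDB. -/
theorem stmt9 {V W : Type*} [Fintype V] [Fintype W]
    (A : SimpleGraph V) (B : SimpleGraph W) (t : ℕ)
    (hA : A.Connected) (hB : B.Connected)
    (hGtA : ∀ a₁ a₂ : V, A.Adj a₁ a₂ →
      (mCount A a₁ a₂ = t * mCount A a₂ a₁ ∧ nCount A a₁ a₂ = t * nCount A a₂ a₁) ∨
      (mCount A a₂ a₁ = t * mCount A a₁ a₂ ∧ nCount A a₂ a₁ = t * nCount A a₁ a₂))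
    (hGtB : ∀ b₁ b₂ : W, B.Adj b₁ b₂ →
      (mCount B b₁ b₂ = t * mCount B b₂ b₁ ∧ nCount B b₁ b₂ = t * nCount B b₂ b₁) ∨
      (mCount B b₂ b₁ = t * mCount B b₁ b₂ ∧ nCount B b₂ b₁ = t * nCount B b₁ b₂)) :
    GtEDB (A.boxProd B) t := by
  rintro ⟨a₁, b₁⟩ ⟨a₂, b₂⟩ hadj
  rcases hadj with ⟨h1, h2⟩ | ⟨h1, h2⟩
  · dsimp only at h1 h2
    subst h2
    rw [keyA hA hB b₁ h1, keyA hA hB b₁ h1.symm]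
    rcases hGtA a₁ a₂ h1 with ⟨hm, hn⟩ | ⟨hm, hn⟩
    · left; rw [hm, hn]; ring
    · right; rw [hm, hn]; ring
  · dsimp only at h1 h2
    subst h2
    rw [keyB hA hB a₁ h1, keyB hA hB a₁ h1.symm]
    rcases hGtB b₁ b₂ h1 with ⟨hm, hn⟩ | ⟨hm, hn⟩
    · left; rw [hm, hn]; ring
    · right; rw [hm, hn]; ring
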